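/- (Corollary 1, Unique fixed point) Assume β_pl ≠ 0 and β_op ≠ 0. There exists a unique V* : S → ℝ such that (B_pl V*)(s) = V*(s) for all s ∈ S. -/

import Mathlib

noncomputable section

/-- The probability simplex over a finite type `X`. -/
def simplex (X : Type*) [Fintype X] : Set (X → ℝ) :=
  {p | (∀ x, 0 ≤ p x) ∧ ∑ x, p x = 1}

variable {S A B : Type*} [Fintype S] [Fintype A] [Fintype B]

/-- The free energy `f(π, σ, s, V)` of the two-player soft stochastic game: expected
one-step reward plus discounted continuation value, minus the information costs of the
player's policy `π` and the opponent's policy `σ` (convention `0·log 0 = 0` holds since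
`Real.log 0 = 0`). -/
def freeEnergy (R : S → A → B → ℝ) (T : S → A → B → S → ℝ) (γ : ℝ)
    (ρpl : S → A → ℝ) (ρop : S → B → ℝ) (βpl βop : ℝ)
    (π : A → ℝ) (σ : B → ℝ) (s : S) (V : S → ℝ) : ℝ :=
  (∑ a, ∑ b, π a * σ b * (R s a b + γ * ∑ s', T s a b s' * V s'))
    - (1 / βpl) * ∑ a, π a * Real.log (π a / ρpl s a)
    - (1 / βop) * ∑ b, σ b * Real.log (σ b / ρop s b)

/-- The extremum operator over the opponent's simplex: a supremum if `β_op > 0`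
and an infimum if `β_op < 0`. -/
def extOp (βop : ℝ) (g : (B → ℝ) → ℝ) : ℝ :=
  if 0 < βop then sSup (g '' simplex B) else sInf (g '' simplex B)

/-- The player's soft Bellman operator `(B_pl V)(s) = sup_π ext_σ f(π, σ, s, V)`. -/
def Bpl (R : S → A → B → ℝ) (T : S → A → B → S → ℝ) (γ : ℝ)
    (ρpl : S → A → ℝ) (ρop : S → B → ℝ) (βpl βop : ℝ) (V : S → ℝ) (s : S) : ℝ :=
  sSup ((fun π => extOp βop (fun σ => freeEnergy R T γ ρpl ρop βpl βop π σ s V)) '' simplex A)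

/-- The opponent's soft Bellman operator `(B_op V)(s) = ext_σ sup_π f(π, σ, s, V)`. -/
def Bop (R : S → A → B → ℝ) (T : S → A → B → S → ℝ) (γ : ℝ)
    (ρpl : S → A → ℝ) (ρop : S → B → ℝ) (βpl βop : ℝ) (V : S → ℝ) (s : S) : ℝ :=
  extOp βop (fun σ => sSup ((fun π => freeEnergy R T γ ρpl ρop βpl βop π σ s V) '' simplex A))

-- auxiliary lemmas

lemma simplex_eq_stdSimplex (X : Type*) [Fintype X] : simplex X = stdSimplex ℝ X := rfl

lemma simplex_nonempty (X : Type*) [Fintype X] [Nonempty X] : (simplex X).Nonempty := by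
  refine ⟨fun _ => (Fintype.card X : ℝ)⁻¹, fun x => by positivity, ?_⟩
  have h : (Fintype.card X : ℝ) ≠ 0 := Nat.cast_ne_zero.mpr Fintype.card_ne_zero
  simp [Finset.sum_const, Finset.card_univ, mul_inv_cancel₀ h]

lemma isCompact_simplex (X : Type*) [Fintype X] : IsCompact (simplex X) :=
  simplex_eq_stdSimplex X ▸ isCompact_stdSimplex ℝ X

lemma continuous_mul_log_div {c : ℝ} (hc : c ≠ 0) :
    Continuous fun x : ℝ => x * Real.log (x / c) := by
  have : (fun x : ℝ => x * Real.log (x / c)) = fun x => x * Real.log x - x * Real.log c := by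
    funext x
    rcases eq_or_ne x 0 with h | h
    · simp [h]
    · rw [Real.log_div h hc]; ring
  rw [this]
  exact Real.continuous_mul_log.sub (continuous_id.mul continuous_const)

lemma continuous_freeEnergy (R : S → A → B → ℝ) (T : S → A → B → S → ℝ) (γ : ℝ)
    (ρpl : S → A → ℝ) (ρop : S → B → ℝ) (βpl βop : ℝ) (s : S) (V : S → ℝ)
    (hρpl : ∀ s a, 0 < ρpl s a) (hρop : ∀ s b, 0 < ρop s b) :
    Continuous fun p : (A → ℝ) × (B → ℝ) =>
      freeEnergy R T γ ρpl ρop βpl βop p.1 p.2 s V := by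
  unfold freeEnergy
  refine Continuous.sub (Continuous.sub ?_ ?_) ?_
  · exact continuous_finset_sum _ fun a _ => continuous_finset_sum _ fun b _ =>
      (((continuous_apply a).comp continuous_fst).mul
        ((continuous_apply b).comp continuous_snd)).mul continuous_const
  · exact continuous_const.mul (continuous_finset_sum _ fun a _ =>
      (continuous_mul_log_div (ne_of_gt (hρpl s a))).comp
        ((continuous_apply a).comp continuous_fst))
  · exact continuous_const.mul (continuous_finset_sum _ fun b _ =>
      (continuous_mul_log_div (ne_of_gt (hρop s b))).comp
        ((continuous_apply b).comp continuous_snd))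

lemma csSup_image_le_add {X : Type*} {K : Set X} (hK : K.Nonempty)
    {g h : X → ℝ} {c : ℝ} (hb : BddAbove (h '' K)) (hle : ∀ x ∈ K, g x ≤ h x + c) :
    sSup (g '' K) ≤ sSup (h '' K) + c := by
  apply csSup_le (hK.image g)
  rintro _ ⟨x, hx, rfl⟩
  exact (hle x hx).trans ((add_le_add_iff_right c).mpr (le_csSup hb ⟨x, hx, rfl⟩))

lemma csInf_image_le_add {X : Type*} {K : Set X} (hK : K.Nonempty)
    {g h : X → ℝ} {c : ℝ} (hb : BddBelow (g '' K)) (hle : ∀ x ∈ K, g x ≤ h x + c) :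
    sInf (g '' K) ≤ sInf (h '' K) + c := by
  rw [← sub_le_iff_le_add]
  apply le_csInf (hK.image h)
  rintro _ ⟨x, hx, rfl⟩
  rw [sub_le_iff_le_add]
  exact (csInf_le hb ⟨x, hx, rfl⟩).trans (hle x hx)

lemma extOp_le_extOp_add [Nonempty B] (βop : ℝ) {g h : (B → ℝ) → ℝ} {c : ℝ}
    (hbg : BddBelow (g '' simplex B)) (hbh : BddAbove (h '' simplex B))
    (hle : ∀ σ ∈ simplex B, g σ ≤ h σ + c) :
    extOp βop g ≤ extOp βop h + c := by
  unfold extOp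
  split_ifs
  · exact csSup_image_le_add (simplex_nonempty B) hbh hle
  · exact csInf_image_le_add (simplex_nonempty B) hbg hle

lemma abs_extOp_le [Nonempty B] (βop : ℝ) {g : (B → ℝ) → ℝ} {M : ℝ}
    (h : ∀ σ ∈ simplex B, |g σ| ≤ M) : |extOp βop g| ≤ M := by
  obtain ⟨σ0, hσ0⟩ := simplex_nonempty B
  have hsub : g '' simplex B ⊆ Set.Icc (-M) M := by
    rintro _ ⟨σ, hσ, rfl⟩
    exact abs_le.mp (h σ hσ)
  have hba : BddAbove (g '' simplex B) := ⟨M, fun x hx => (hsub hx).2⟩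
  have hbb : BddBelow (g '' simplex B) := ⟨-M, fun x hx => (hsub hx).1⟩
  rw [abs_le]
  unfold extOp
  split_ifs
  · exact ⟨le_trans (abs_le.mp (h σ0 hσ0)).1 (le_csSup hba ⟨σ0, hσ0, rfl⟩),
      csSup_le ⟨g σ0, σ0, hσ0, rfl⟩ fun x hx => (hsub hx).2⟩
  · exact ⟨le_csInf ⟨g σ0, σ0, hσ0, rfl⟩ fun x hx => (hsub hx).1,
      le_trans (csInf_le hbb ⟨σ0, hσ0, rfl⟩) (abs_le.mp (h σ0 hσ0)).2⟩


/-- (Corollary 1, Unique fixed point) For nonzero `β_pl`, `β_op`, the soft Bellman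
operator `B_pl` has a unique fixed point `V* : S → ℝ`. -/
theorem Bpl_existsUnique_fixedPoint [Nonempty S] [Nonempty A] [Nonempty B]
    (R : S → A → B → ℝ) (T : S → A → B → S → ℝ) (γ : ℝ) (hγ0 : 0 ≤ γ) (hγ1 : γ < 1)
    (hT0 : ∀ s a b s', 0 ≤ T s a b s') (hT1 : ∀ s a b, ∑ s', T s a b s' = 1)
    (ρpl : S → A → ℝ) (ρop : S → B → ℝ)
    (hρpl : ∀ s a, 0 < ρpl s a) (hρpl1 : ∀ s, ∑ a, ρpl s a = 1)
    (hρop : ∀ s b, 0 < ρop s b) (hρop1 : ∀ s, ∑ b, ρop s b = 1)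
    (βpl βop : ℝ) (hβpl : βpl ≠ 0) (hβop : βop ≠ 0) :
    ∃! Vstar : S → ℝ, ∀ s, Bpl R T γ ρpl ρop βpl βop Vstar s = Vstar s := by
  set F := fun (V : S → ℝ) (π : A → ℝ) (σ : B → ℝ) (s : S) =>
    freeEnergy R T γ ρpl ρop βpl βop π σ s V with hF
  -- boundedness of F on the product of simplexes
  have hbound : ∀ (V : S → ℝ) (s : S), ∃ M : ℝ,
      ∀ π ∈ simplex A, ∀ σ ∈ simplex B, |F V π σ s| ≤ M := by
    intro V s
    obtain ⟨C, hC⟩ := ((isCompact_simplex A).prod (isCompact_simplex B)).exists_bound_of_continuousOn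
      (continuous_freeEnergy R T γ ρpl ρop βpl βop s V hρpl hρop).continuousOn
    exact ⟨C, fun π hπ σ hσ => hC (π, σ) ⟨hπ, hσ⟩⟩
  -- key pointwise difference bound
  have key : ∀ (V W : S → ℝ) (s : S), ∀ π ∈ simplex A, ∀ σ ∈ simplex B,
      |F V π σ s - F W π σ s| ≤ γ * dist V W := by
    intro V W s π hπ σ hσ
    have hd : ∀ s', |V s' - W s'| ≤ dist V W := fun s' => by
      rw [← Real.dist_eq]; exact dist_le_pi_dist V W s'
    have hdnn : 0 ≤ dist V W := dist_nonneg
    have hdiff : F V π σ s - F W π σ s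
        = ∑ a, ∑ b, π a * σ b * (γ * ∑ s', T s a b s' * (V s' - W s')) := by
      simp only [hF, freeEnergy]
      rw [show ∀ X Y E1 E2 : ℝ, X - E1 - E2 - (Y - E1 - E2) = X - Y by intros; ring]
      rw [← Finset.sum_sub_distrib]
      refine Finset.sum_congr rfl fun a _ => ?_
      rw [← Finset.sum_sub_distrib]
      refine Finset.sum_congr rfl fun b _ => ?_
      have : ∑ s', T s a b s' * (V s' - W s')
          = ∑ s', T s a b s' * V s' - ∑ s', T s a b s' * W s' := by
        rw [← Finset.sum_sub_distrib]
        exact Finset.sum_congr rfl fun _ _ => by ring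
      rw [this]; ring
    rw [hdiff]
    calc |∑ a, ∑ b, π a * σ b * (γ * ∑ s', T s a b s' * (V s' - W s'))|
        ≤ ∑ a, ∑ b, |π a * σ b * (γ * ∑ s', T s a b s' * (V s' - W s'))| :=
          (Finset.abs_sum_le_sum_abs _ _).trans (Finset.sum_le_sum fun a _ =>
            Finset.abs_sum_le_sum_abs _ _)
      _ ≤ ∑ a, ∑ b, π a * σ b * (γ * dist V W) := by
          refine Finset.sum_le_sum fun a _ => Finset.sum_le_sum fun b _ => ?_
          rw [abs_mul, abs_mul, abs_of_nonneg (hπ.1 a), abs_of_nonneg (hσ.1 b), abs_mul,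
            abs_of_nonneg hγ0]
          have hin : |∑ s', T s a b s' * (V s' - W s')| ≤ dist V W :=
            calc |∑ s', T s a b s' * (V s' - W s')|
                ≤ ∑ s', |T s a b s' * (V s' - W s')| := Finset.abs_sum_le_sum_abs _ _
              _ ≤ ∑ s', T s a b s' * dist V W := Finset.sum_le_sum fun s' _ => by
                  rw [abs_mul, abs_of_nonneg (hT0 s a b s')]
                  exact mul_le_mul_of_nonneg_left (hd s') (hT0 s a b s')
              _ = dist V W := by rw [← Finset.sum_mul, hT1 s a b, one_mul]
          exact mul_le_mul_of_nonneg_left (mul_le_mul_of_nonneg_left hin hγ0)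
            (mul_nonneg (hπ.1 a) (hσ.1 b))
      _ = γ * dist V W := by
          have h1 : ∀ a, ∑ b, π a * σ b * (γ * dist V W) = π a * (γ * dist V W) := fun a => by
            rw [← Finset.sum_mul, ← Finset.mul_sum, hσ.2, mul_one]
          rw [Finset.sum_congr rfl (fun a _ => h1 a), ← Finset.sum_mul, hπ.2, one_mul]
  -- contraction estimate on Bpl
  have contr : ∀ (V W : S → ℝ) (s : S),
      Bpl R T γ ρpl ρop βpl βop V s ≤ Bpl R T γ ρpl ρop βpl βop W s + γ * dist V W := by
    intro V W s
    obtain ⟨MV, hMV⟩ := hbound V s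
    obtain ⟨MW, hMW⟩ := hbound W s
    unfold Bpl
    apply csSup_image_le_add (simplex_nonempty A)
    · refine ⟨MW, ?_⟩
      rintro _ ⟨π, hπ, rfl⟩
      exact (abs_le.mp (abs_extOp_le βop fun σ hσ => hMW π hπ σ hσ)).2
    · intro π hπ
      apply extOp_le_extOp_add βop
      · exact ⟨-MV, by rintro _ ⟨σ, hσ, rfl⟩; exact (abs_le.mp (hMV π hπ σ hσ)).1⟩
      · exact ⟨MW, by rintro _ ⟨σ, hσ, rfl⟩; exact (abs_le.mp (hMW π hπ σ hσ)).2⟩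
      · intro σ hσ
        have := (abs_le.mp (key V W s π hπ σ hσ)).2
        linarith
  -- Lipschitz
  have hlip : LipschitzWith γ.toNNReal (Bpl R T γ ρpl ρop βpl βop) := by
    apply LipschitzWith.of_dist_le_mul
    intro V W
    rw [Real.coe_toNNReal γ hγ0]
    rw [dist_pi_le_iff (by positivity)]
    intro s
    rw [Real.dist_eq, abs_le]
    constructor
    · have := contr W V s
      rw [dist_comm W V] at this
      linarith
    · have := contr V W s
      linarith
  have hc : ContractingWith γ.toNNReal (Bpl R T γ ρpl ρop βpl βop) :=
    ⟨by rwa [← NNReal.coe_lt_coe, Real.coe_toNNReal γ hγ0, NNReal.coe_one], hlip⟩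
  refine ⟨hc.fixedPoint _, ?_, ?_⟩
  · intro s
    exact congrFun hc.fixedPoint_isFixedPt s
  · intro V hV
    exact hc.fixedPoint_unique (funext hV)
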